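/- Let G = (V, E_1, …, E_k) be a multilayer graph and S_i ⊆ E_i (i ∈ [k]) labelings each fulfilling the STC for E_i, and let s* = Σ_{i∈[k]} |S_i| − d_k(S_1,…,S_k). Define F_i = { e ∈ S_i : e ∈ E_j∖S_j for some j ∈ [k] } and H_i = S_i ∖ F_i. Then each H_i fulfills the STC for E_i, d_k(H_1,…,H_k) = 0, and Σ_{i∈[k]} |H_i| = s*. -/

import Mathlib

open Finset

/-- A wedge `(v, {u, w})` of an edge set `E`. -/
def IsWedge {V : Type*} (E : Finset (Sym2 V)) (v u w : V) : Prop :=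
  u ≠ v ∧ v ≠ w ∧ u ≠ w ∧ s(u, v) ∈ E ∧ s(v, w) ∈ E ∧ s(u, w) ∉ E

/-- A labeling `S ⊆ E` fulfills the strong triadic closure for `E`. -/
def FulfillsSTC {V : Type*} (E S : Finset (Sym2 V)) : Prop :=
  ∀ u v w : V, u ≠ v → v ≠ w → u ≠ w → s(u, v) ∈ S → s(v, w) ∈ S → s(u, w) ∈ E

/-- `s(e)`: the number of layers in which `e` is labeled strong. -/
def sCount {V : Type*} [DecidableEq V] {k : ℕ} (Ss : Fin k → Finset (Sym2 V))
    (e : Sym2 V) : ℕ :=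
  (Finset.univ.filter fun i => e ∈ Ss i).card

/-- `w(e)`: the number of layers in which `e` is labeled weak. -/
def wCount {V : Type*} [DecidableEq V] {k : ℕ} (Es Ss : Fin k → Finset (Sym2 V))
    (e : Sym2 V) : ℕ :=
  (Finset.univ.filter fun i => e ∈ Es i ∧ e ∉ Ss i).card

/-- `d_k(S_1, …, S_k) = ∑_{e ∈ E, w(e) > 0} s(e)`: the number of disagreements. -/
def disagree {V : Type*} [DecidableEq V] {k : ℕ} (Es Ss : Fin k → Finset (Sym2 V)) : ℕ :=
  ∑ e ∈ (Finset.univ.biUnion Es).filter (fun e => 0 < wCount Es Ss e), sCount Ss e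

/-- Removing from each `S_i` the strong edges that are weak in some layer yields
labelings `H_i` that still fulfill the STC, have no disagreements, and whose total
size equals `s* = ∑_i |S_i| − d_k(S_1, …, S_k)`. -/
theorem consistent_relabeling {V : Type*} [DecidableEq V] {k : ℕ}
    (Es Ss : Fin k → Finset (Sym2 V)) (hS : ∀ i, Ss i ⊆ Es i)
    (hstc : ∀ i, FulfillsSTC (Es i) (Ss i)) :
    let F : Fin k → Finset (Sym2 V) :=
      fun i => (Ss i).filter fun e => ∃ j, e ∈ Es j ∧ e ∉ Ss j
    let H : Fin k → Finset (Sym2 V) := fun i => Ss i \ F i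
    (∀ i, FulfillsSTC (Es i) (H i)) ∧ disagree Es H = 0 ∧
      (∑ i : Fin k, ((H i).card : ℤ)) =
        (∑ i : Fin k, ((Ss i).card : ℤ)) - (disagree Es Ss : ℤ) := by
  intro F H
  have hFsub : ∀ i, F i ⊆ Ss i := fun i => filter_subset _ _
  have hHmem : ∀ i e, e ∈ H i ↔ e ∈ Ss i ∧ ¬∃ j, e ∈ Es j ∧ e ∉ Ss j := by
    intro i e
    simp [H, F, mem_sdiff, mem_filter]
    tauto
  refine ⟨?_, ?_, ?_⟩
  · intro i u v w huv hvw huw h1 h2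
    exact hstc i u v w huv hvw huw ((hHmem i _).mp h1).1 ((hHmem i _).mp h2).1
  · apply Finset.sum_eq_zero
    intro e he
    simp only [mem_filter] at he
    obtain ⟨-, hw⟩ := he
    rw [wCount, Finset.card_pos] at hw
    obtain ⟨j, hj⟩ := hw
    simp only [mem_filter, mem_univ, true_and] at hj
    rw [sCount, Finset.card_eq_zero, Finset.filter_eq_empty_iff]
    intro i _
    intro hi
    obtain ⟨hSi, hno⟩ := (hHmem i e).mp hi
    have hej : e ∈ Ss j := by
      by_contra h
      exact hno ⟨j, hj.1, h⟩
    exact hj.2 ((hHmem j e).mpr ⟨hej, hno⟩)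
  · have hF : (∑ i : Fin k, ((F i).card : ℤ)) = (disagree Es Ss : ℤ) := by
      have key : ∀ i, F i =
          ((Finset.univ.biUnion Es).filter (fun e => 0 < wCount Es Ss e)).filter
            (fun e => e ∈ Ss i) := by
        intro i
        ext e
        simp only [F, mem_filter, mem_biUnion, mem_univ, true_and, wCount,
          Finset.card_pos, Finset.filter_nonempty_iff]
        constructor
        · rintro ⟨hSi, j, hj1, hj2⟩
          exact ⟨⟨⟨i, hS i hSi⟩, j, hj1, hj2⟩, hSi⟩
        · rintro ⟨⟨-, j, hj1, hj2⟩, hSi⟩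
          exact ⟨hSi, j, hj1, hj2⟩
      have : (∑ i : Fin k, (F i).card) = disagree Es Ss := by
        unfold disagree
        calc (∑ i : Fin k, (F i).card)
            = ∑ i : Fin k, ∑ e ∈ (Finset.univ.biUnion Es).filter
                (fun e => 0 < wCount Es Ss e), (if e ∈ Ss i then 1 else 0) := by
              refine Finset.sum_congr rfl fun i _ => ?_
              rw [key i, Finset.card_filter]
          _ = ∑ e ∈ (Finset.univ.biUnion Es).filter (fun e => 0 < wCount Es Ss e),
                ∑ i : Fin k, (if e ∈ Ss i then 1 else 0) := Finset.sum_comm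
          _ = ∑ e ∈ (Finset.univ.biUnion Es).filter (fun e => 0 < wCount Es Ss e),
                sCount Ss e := by
              refine Finset.sum_congr rfl fun e _ => ?_
              rw [sCount, Finset.card_filter]
      exact_mod_cast congrArg (Nat.cast : ℕ → ℤ) this
    have hcard : ∀ i, ((H i).card : ℤ) = (Ss i).card - (F i).card := by
      intro i
      have h2 := Finset.card_le_card (hFsub i)
      simp only [H]
      rw [Finset.card_sdiff_of_subset (hFsub i)]
      omega
    rw [Finset.sum_congr rfl (fun i _ => hcard i), Finset.sum_sub_distrib, hF]
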